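/- For every θ ∈ (0,1] and every δ with 0 < δ < θ/2, the potential F_δ(r) = F_δ^log(r) + (1−r²)/2 satisfies assumptions (A1)-(A2) with q = 1: there exists β₀ ∈ ℝ with F_δ(r) ≥ β₀ for all r ∈ ℝ; F₁ := F_δ^log is twice continuously differentiable, nonnegative and convex; F₂(r) := (1−r²)/2 satisfies |F₂'(r)| = |r|; and there exist constants α > 0 and β ≥ 0 (depending on θ and δ) such that for all r ∈ ℝ: |φ_δ(r)| ≤ α·|r| + β, |φ_δ(r)| ≤ α·F_δ^log(r) + β, and |r·φ_δ(r)| ≤ α·F_δ^log(r) + β. -/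

import Mathlib

open Real Set

/-- The regularized logarithmic potential `F_δ^log` at temperature `θ`. -/
noncomputable def Flogδ (θ δ : ℝ) (r : ℝ) : ℝ :=
  if 1 - δ ≤ r then
    (θ/2) * ((1-r) * Real.log δ + (1+r) * Real.log (2-δ)
      + (1-r)^2/(2*δ) + (1+r)^2/(2*(2-δ)) - 1)
  else if r ≤ -(1-δ) then
    (θ/2) * ((1+r) * Real.log δ + (1-r) * Real.log (2-δ)
      + (1+r)^2/(2*δ) + (1-r)^2/(2*(2-δ)) - 1)
  else
    (θ/2) * ((1+r) * Real.log (1+r) + (1-r) * Real.log (1-r))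

/-! ### Auxiliary definitions: the three pieces and the derivatives -/

noncomputable def gP (θ δ r : ℝ) : ℝ :=
  (θ/2) * ((1-r) * Real.log δ + (1+r) * Real.log (2-δ)
    + (1-r)^2/(2*δ) + (1+r)^2/(2*(2-δ)) - 1)
noncomputable def gM (θ δ r : ℝ) : ℝ :=
  (θ/2) * ((1+r) * Real.log δ + (1-r) * Real.log (2-δ)
    + (1+r)^2/(2*δ) + (1-r)^2/(2*(2-δ)) - 1)
noncomputable def gC (θ r : ℝ) : ℝ :=
  (θ/2) * ((1+r) * Real.log (1+r) + (1-r) * Real.log (1-r))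
noncomputable def phiP (θ δ r : ℝ) : ℝ :=
  (θ/2) * (Real.log (2-δ) - Real.log δ - (1-r)/δ + (1+r)/(2-δ))
noncomputable def phiM (θ δ r : ℝ) : ℝ :=
  (θ/2) * (Real.log δ - Real.log (2-δ) + (1+r)/δ - (1-r)/(2-δ))
noncomputable def phiC (θ r : ℝ) : ℝ :=
  (θ/2) * (Real.log (1+r) - Real.log (1-r))
noncomputable def phiδ (θ δ r : ℝ) : ℝ :=
  if 1 - δ ≤ r then phiP θ δ r else if r ≤ -(1-δ) then phiM θ δ r else phiC θ r
noncomputable def psiδ (θ δ r : ℝ) : ℝ :=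
  θ / (1 - (max (-(1-δ)) (min r (1-δ)))^2)

/-! ### Branch identification -/

lemma Flog_eq_gP (θ δ r : ℝ) (h : 1 - δ ≤ r) : Flogδ θ δ r = gP θ δ r := by
  unfold Flogδ gP; rw [if_pos h]

lemma Flog_eq_gM (θ δ r : ℝ) (hδ1 : δ < 1) (h : r ≤ -(1-δ)) : Flogδ θ δ r = gM θ δ r := by
  unfold Flogδ gM
  rw [if_neg (by linarith), if_pos h]

lemma Flog_eq_gC (θ δ r : ℝ) (h1 : -(1-δ) < r) (h2 : r < 1-δ) : Flogδ θ δ r = gC θ r := by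
  unfold Flogδ gC
  rw [if_neg (by linarith), if_neg (by linarith)]

lemma phid_eq_P (θ δ r : ℝ) (h : 1 - δ ≤ r) : phiδ θ δ r = phiP θ δ r := by
  unfold phiδ; rw [if_pos h]

lemma phid_eq_M (θ δ r : ℝ) (hδ1 : δ < 1) (h : r ≤ -(1-δ)) : phiδ θ δ r = phiM θ δ r := by
  unfold phiδ; rw [if_neg (by linarith), if_pos h]

lemma phid_eq_C (θ δ r : ℝ) (h1 : -(1-δ) < r) (h2 : r < 1-δ) : phiδ θ δ r = phiC θ r := by
  unfold phiδ; rw [if_neg (by linarith), if_neg (by linarith)]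

/-! ### Boundary compatibility -/

lemma gP_bdry (θ δ : ℝ) (hδ : 0 < δ) (hδ2 : δ < 2) : gP θ δ (1-δ) = gC θ (1-δ) := by
  unfold gP gC
  have hδ' : δ ≠ 0 := ne_of_gt hδ
  have h2δ : (2:ℝ) - δ ≠ 0 := by linarith
  have e1 : (1:ℝ) + (1-δ) = 2 - δ := by ring
  have e2 : (1:ℝ) - (1-δ) = δ := by ring
  rw [e1, e2]; field_simp; ring

lemma gM_bdry (θ δ : ℝ) (hδ : 0 < δ) (hδ2 : δ < 2) : gM θ δ (-(1-δ)) = gC θ (-(1-δ)) := by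
  unfold gM gC
  have hδ' : δ ≠ 0 := ne_of_gt hδ
  have h2δ : (2:ℝ) - δ ≠ 0 := by linarith
  have e1 : (1:ℝ) + -(1-δ) = δ := by ring
  have e2 : (1:ℝ) - -(1-δ) = 2 - δ := by ring
  rw [e1, e2]; field_simp; ring

lemma phiP_bdry (θ δ : ℝ) (hδ : 0 < δ) (hδ2 : δ < 2) : phiP θ δ (1-δ) = phiC θ (1-δ) := by
  unfold phiP phiC
  have hδ' : δ ≠ 0 := ne_of_gt hδ
  have h2δ : (2:ℝ) - δ ≠ 0 := by linarith
  have e1 : (1:ℝ) + (1-δ) = 2 - δ := by ring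
  have e2 : (1:ℝ) - (1-δ) = δ := by ring
  rw [e1, e2]; field_simp; ring

lemma phiM_bdry (θ δ : ℝ) (hδ : 0 < δ) (hδ2 : δ < 2) : phiM θ δ (-(1-δ)) = phiC θ (-(1-δ)) := by
  unfold phiM phiC
  have hδ' : δ ≠ 0 := ne_of_gt hδ
  have h2δ : (2:ℝ) - δ ≠ 0 := by linarith
  have e1 : (1:ℝ) + -(1-δ) = δ := by ring
  have e2 : (1:ℝ) - -(1-δ) = 2 - δ := by ring
  rw [e1, e2]; field_simp; ring

/-! ### Derivatives of the pieces -/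

lemma hasDerivAt_gP (θ δ r : ℝ) (hδ : 0 < δ) (hδ2 : δ < 2) :
    HasDerivAt (gP θ δ) (phiP θ δ r) r := by
  have h1 : HasDerivAt (fun x : ℝ => (1-x) * Real.log δ) (-1 * Real.log δ) r :=
    ((hasDerivAt_id r).const_sub 1).mul_const _
  have h2 : HasDerivAt (fun x : ℝ => (1+x) * Real.log (2-δ)) (1 * Real.log (2-δ)) r :=
    ((hasDerivAt_id r).const_add 1).mul_const _
  have h3 : HasDerivAt (fun x : ℝ => (1-x)^2/(2*δ)) ((2 * (1-r)^1 * (-1))/(2*δ)) r :=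
    (((hasDerivAt_id r).const_sub 1).pow 2).div_const _
  have h4 : HasDerivAt (fun x : ℝ => (1+x)^2/(2*(2-δ))) ((2 * (1+r)^1 * 1)/(2*(2-δ))) r :=
    (((hasDerivAt_id r).const_add 1).pow 2).div_const _
  have H := ((((h1.add h2).add h3).add h4).sub_const 1).const_mul (θ/2)
  refine H.congr_deriv ?_
  have hδ' : δ ≠ 0 := ne_of_gt hδ
  have h2δ : (2:ℝ) - δ ≠ 0 := by linarith
  unfold phiP; field_simp; ring

lemma hasDerivAt_gM (θ δ r : ℝ) (hδ : 0 < δ) (hδ2 : δ < 2) :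
    HasDerivAt (gM θ δ) (phiM θ δ r) r := by
  have h1 : HasDerivAt (fun x : ℝ => (1+x) * Real.log δ) (1 * Real.log δ) r :=
    ((hasDerivAt_id r).const_add 1).mul_const _
  have h2 : HasDerivAt (fun x : ℝ => (1-x) * Real.log (2-δ)) (-1 * Real.log (2-δ)) r :=
    ((hasDerivAt_id r).const_sub 1).mul_const _
  have h3 : HasDerivAt (fun x : ℝ => (1+x)^2/(2*δ)) ((2 * (1+r)^1 * 1)/(2*δ)) r :=
    (((hasDerivAt_id r).const_add 1).pow 2).div_const _
  have h4 : HasDerivAt (fun x : ℝ => (1-x)^2/(2*(2-δ))) ((2 * (1-r)^1 * (-1))/(2*(2-δ))) r :=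
    (((hasDerivAt_id r).const_sub 1).pow 2).div_const _
  have H := ((((h1.add h2).add h3).add h4).sub_const 1).const_mul (θ/2)
  refine H.congr_deriv ?_
  have hδ' : δ ≠ 0 := ne_of_gt hδ
  have h2δ : (2:ℝ) - δ ≠ 0 := by linarith
  unfold phiM; field_simp; ring

lemma hasDerivAt_gC (θ r : ℝ) (h1 : 0 < 1 + r) (h2 : 0 < 1 - r) :
    HasDerivAt (gC θ) (phiC θ r) r := by
  have hl1 : HasDerivAt (fun x : ℝ => Real.log (1+x)) ((1+r)⁻¹ * 1) r :=
    (Real.hasDerivAt_log (ne_of_gt h1)).comp r ((hasDerivAt_id r).const_add 1)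
  have hl2 : HasDerivAt (fun x : ℝ => Real.log (1-x)) ((1-r)⁻¹ * (-1)) r :=
    (Real.hasDerivAt_log (ne_of_gt h2)).comp r ((hasDerivAt_id r).const_sub 1)
  have hm1 : HasDerivAt (fun x : ℝ => (1+x) * Real.log (1+x))
      (1 * Real.log (1+r) + (1+r) * ((1+r)⁻¹ * 1)) r :=
    ((hasDerivAt_id r).const_add 1).mul hl1
  have hm2 : HasDerivAt (fun x : ℝ => (1-x) * Real.log (1-x))
      (-1 * Real.log (1-r) + (1-r) * ((1-r)⁻¹ * (-1))) r :=
    ((hasDerivAt_id r).const_sub 1).mul hl2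
  have H := (hm1.add hm2).const_mul (θ/2)
  refine H.congr_deriv ?_
  have h1' : (1:ℝ) + r ≠ 0 := ne_of_gt h1
  have h2' : (1:ℝ) - r ≠ 0 := ne_of_gt h2
  unfold phiC; field_simp; ring

lemma hasDerivAt_phiP (θ δ r : ℝ) (hδ : 0 < δ) (hδ2 : δ < 2) :
    HasDerivAt (phiP θ δ) (θ/(δ*(2-δ))) r := by
  have h3 : HasDerivAt (fun x : ℝ => (1-x)/δ) (-1/δ) r :=
    ((hasDerivAt_id r).const_sub 1).div_const _
  have h4 : HasDerivAt (fun x : ℝ => (1+x)/(2-δ)) (1/(2-δ)) r :=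
    ((hasDerivAt_id r).const_add 1).div_const _
  have H := (((hasDerivAt_const r (Real.log (2-δ) - Real.log δ)).sub h3).add h4).const_mul (θ/2)
  refine H.congr_deriv ?_
  have hδ' : δ ≠ 0 := ne_of_gt hδ
  have h2δ : (2:ℝ) - δ ≠ 0 := by linarith
  field_simp; ring

lemma hasDerivAt_phiM (θ δ r : ℝ) (hδ : 0 < δ) (hδ2 : δ < 2) :
    HasDerivAt (phiM θ δ) (θ/(δ*(2-δ))) r := by
  have h3 : HasDerivAt (fun x : ℝ => (1+x)/δ) (1/δ) r :=
    ((hasDerivAt_id r).const_add 1).div_const _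
  have h4 : HasDerivAt (fun x : ℝ => (1-x)/(2-δ)) (-1/(2-δ)) r :=
    ((hasDerivAt_id r).const_sub 1).div_const _
  have H := (((hasDerivAt_const r (Real.log δ - Real.log (2-δ))).add h3).sub h4).const_mul (θ/2)
  refine H.congr_deriv ?_
  have hδ' : δ ≠ 0 := ne_of_gt hδ
  have h2δ : (2:ℝ) - δ ≠ 0 := by linarith
  field_simp; ring

lemma hasDerivAt_phiC (θ r : ℝ) (h1 : 0 < 1 + r) (h2 : 0 < 1 - r) :
    HasDerivAt (phiC θ) (θ/(1-r^2)) r := by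
  have hl1 : HasDerivAt (fun x : ℝ => Real.log (1+x)) ((1+r)⁻¹ * 1) r :=
    (Real.hasDerivAt_log (ne_of_gt h1)).comp r ((hasDerivAt_id r).const_add 1)
  have hl2 : HasDerivAt (fun x : ℝ => Real.log (1-x)) ((1-r)⁻¹ * (-1)) r :=
    (Real.hasDerivAt_log (ne_of_gt h2)).comp r ((hasDerivAt_id r).const_sub 1)
  have H := (hl1.sub hl2).const_mul (θ/2)
  refine H.congr_deriv ?_
  have h1' : (1:ℝ) + r ≠ 0 := ne_of_gt h1
  have h2' : (1:ℝ) - r ≠ 0 := ne_of_gt h2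
  have e : 1 - r^2 = (1+r)*(1-r) := by ring
  rw [e]; field_simp; ring

/-! ### Values of psiδ -/

lemma psi_eq_P (θ δ r : ℝ) (hδ1 : δ < 1) (h : 1 - δ ≤ r) (hδ : 0 < δ) (hδ2 : δ < 2) :
    psiδ θ δ r = θ/(δ*(2-δ)) := by
  unfold psiδ
  rw [min_eq_right h, max_eq_right (by linarith)]
  congr 1; ring

lemma psi_eq_M (θ δ r : ℝ) (hδ1 : δ < 1) (h : r ≤ -(1-δ)) (hδ : 0 < δ) (hδ2 : δ < 2) :
    psiδ θ δ r = θ/(δ*(2-δ)) := by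
  unfold psiδ
  rw [min_eq_left (by linarith), max_eq_left h]
  congr 1; ring

lemma psi_eq_C (θ δ r : ℝ) (h1 : -(1-δ) ≤ r) (h2 : r ≤ 1-δ) :
    psiδ θ δ r = θ/(1-r^2) := by
  unfold psiδ
  rw [min_eq_left h2, max_eq_right h1]

/-! ### Derivative of Flogδ is phiδ -/

lemma hasDerivAt_Flog (θ δ : ℝ) (hδ : 0 < δ) (hδ1 : δ < 1) (r : ℝ) :
    HasDerivAt (Flogδ θ δ) (phiδ θ δ r) r := by
  have hδ2 : δ < 2 := by linarith
  have hb : -(1-δ) < 1-δ := by linarith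
  rcases lt_trichotomy r (1-δ) with h1 | h1 | h1
  · rcases lt_trichotomy r (-(1-δ)) with h2 | h2 | h2
    · -- r < -(1-δ)
      rw [phid_eq_M θ δ r hδ1 h2.le]
      refine (hasDerivAt_gM θ δ r hδ hδ2).congr_of_eventuallyEq ?_
      filter_upwards [Iio_mem_nhds h2] with y hy
      exact Flog_eq_gM θ δ y hδ1 hy.le
    · -- r = -(1-δ)
      subst h2
      rw [phid_eq_M θ δ _ hδ1 le_rfl]
      have hIic : HasDerivWithinAt (Flogδ θ δ) (phiM θ δ (-(1-δ))) (Iic (-(1-δ))) (-(1-δ)) := by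
        refine ((hasDerivAt_gM θ δ _ hδ hδ2).hasDerivWithinAt).congr_of_eventuallyEq ?_
          (Flog_eq_gM θ δ _ hδ1 le_rfl)
        exact Filter.eventuallyEq_of_mem self_mem_nhdsWithin
          (fun y hy => Flog_eq_gM θ δ y hδ1 hy)
      have hIci : HasDerivWithinAt (Flogδ θ δ) (phiM θ δ (-(1-δ))) (Ici (-(1-δ))) (-(1-δ)) := by
        rw [phiM_bdry θ δ hδ hδ2]
        refine ((hasDerivAt_gC θ (-(1-δ)) (by linarith) (by linarith)).hasDerivWithinAt).congr_of_eventuallyEq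
          ?_ ?_
        · have hmem : Iio (1-δ) ∩ Ici (-(1-δ)) ∈ nhdsWithin (-(1-δ)) (Ici (-(1-δ))) :=
            Filter.inter_mem (mem_nhdsWithin_of_mem_nhds (Iio_mem_nhds hb)) self_mem_nhdsWithin
          refine Filter.eventuallyEq_of_mem hmem (fun y hy => ?_)
          obtain ⟨hy1, hy2⟩ := hy
          have hy1' : -(1 - δ) ≤ y := hy2
          rcases eq_or_lt_of_le hy1' with he | hlt
          · rw [← he, Flog_eq_gM θ δ _ hδ1 le_rfl, gM_bdry θ δ hδ hδ2]
          · exact Flog_eq_gC θ δ y hlt hy1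
        · rw [Flog_eq_gM θ δ _ hδ1 le_rfl, gM_bdry θ δ hδ hδ2]
      have h := hIic.union hIci
      rw [Iic_union_Ici] at h
      exact hasDerivWithinAt_univ.mp h
    · -- middle
      rw [phid_eq_C θ δ r h2 h1]
      refine (hasDerivAt_gC θ r (by linarith) (by linarith)).congr_of_eventuallyEq ?_
      filter_upwards [Ioo_mem_nhds h2 h1] with y hy
      exact Flog_eq_gC θ δ y hy.1 hy.2
  · -- r = 1-δ
    subst h1
    rw [phid_eq_P θ δ _ le_rfl]
    have hIci : HasDerivWithinAt (Flogδ θ δ) (phiP θ δ (1-δ)) (Ici (1-δ)) (1-δ) := by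
      refine ((hasDerivAt_gP θ δ _ hδ hδ2).hasDerivWithinAt).congr_of_eventuallyEq ?_
        (Flog_eq_gP θ δ _ le_rfl)
      exact Filter.eventuallyEq_of_mem self_mem_nhdsWithin
        (fun y hy => Flog_eq_gP θ δ y hy)
    have hIic : HasDerivWithinAt (Flogδ θ δ) (phiP θ δ (1-δ)) (Iic (1-δ)) (1-δ) := by
      rw [phiP_bdry θ δ hδ hδ2]
      refine ((hasDerivAt_gC θ (1-δ) (by linarith) (by linarith)).hasDerivWithinAt).congr_of_eventuallyEq
        ?_ ?_
      · have hmem : Ioi (-(1-δ)) ∩ Iic (1-δ) ∈ nhdsWithin (1-δ) (Iic (1-δ)) :=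
          Filter.inter_mem (mem_nhdsWithin_of_mem_nhds (Ioi_mem_nhds hb)) self_mem_nhdsWithin
        refine Filter.eventuallyEq_of_mem hmem (fun y hy => ?_)
        obtain ⟨hy1, hy2⟩ := hy
        have hy2' : y ≤ 1 - δ := hy2
        rcases eq_or_lt_of_le hy2' with he | hlt
        · rw [he, Flog_eq_gP θ δ _ le_rfl, gP_bdry θ δ hδ hδ2]
        · exact Flog_eq_gC θ δ y hy1 hlt
      · rw [Flog_eq_gP θ δ _ le_rfl, gP_bdry θ δ hδ hδ2]
    have h := hIic.union hIci
    rw [Iic_union_Ici] at h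
    exact hasDerivWithinAt_univ.mp h
  · -- r > 1-δ
    rw [phid_eq_P θ δ r h1.le]
    refine (hasDerivAt_gP θ δ r hδ hδ2).congr_of_eventuallyEq ?_
    filter_upwards [Ioi_mem_nhds h1] with y hy
    exact Flog_eq_gP θ δ y hy.le

/-! ### Derivative of phiδ is psiδ -/

lemma hasDerivAt_phid (θ δ : ℝ) (hδ : 0 < δ) (hδ1 : δ < 1) (r : ℝ) :
    HasDerivAt (phiδ θ δ) (psiδ θ δ r) r := by
  have hδ2 : δ < 2 := by linarith
  have hb : -(1-δ) < 1-δ := by linarith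
  have hval : θ/(1-(1-δ)^2) = θ/(δ*(2-δ)) := by congr 1; ring
  rcases lt_trichotomy r (1-δ) with h1 | h1 | h1
  · rcases lt_trichotomy r (-(1-δ)) with h2 | h2 | h2
    · rw [psi_eq_M θ δ r hδ1 h2.le hδ hδ2]
      refine (hasDerivAt_phiM θ δ r hδ hδ2).congr_of_eventuallyEq ?_
      filter_upwards [Iio_mem_nhds h2] with y hy
      exact phid_eq_M θ δ y hδ1 hy.le
    · subst h2
      rw [psi_eq_M θ δ _ hδ1 le_rfl hδ hδ2]
      have hIic : HasDerivWithinAt (phiδ θ δ) (θ/(δ*(2-δ))) (Iic (-(1-δ))) (-(1-δ)) := by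
        refine ((hasDerivAt_phiM θ δ _ hδ hδ2).hasDerivWithinAt).congr_of_eventuallyEq ?_
          (phid_eq_M θ δ _ hδ1 le_rfl)
        exact Filter.eventuallyEq_of_mem self_mem_nhdsWithin
          (fun y hy => phid_eq_M θ δ y hδ1 hy)
      have hIci : HasDerivWithinAt (phiδ θ δ) (θ/(δ*(2-δ))) (Ici (-(1-δ))) (-(1-δ)) := by
        have hv2 : θ/(1-(-(1-δ))^2) = θ/(δ*(2-δ)) := by congr 1; ring
        rw [← hv2]
        refine ((hasDerivAt_phiC θ (-(1-δ)) (by linarith) (by linarith)).hasDerivWithinAt).congr_of_eventuallyEq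
          ?_ ?_
        · have hmem : Iio (1-δ) ∩ Ici (-(1-δ)) ∈ nhdsWithin (-(1-δ)) (Ici (-(1-δ))) :=
            Filter.inter_mem (mem_nhdsWithin_of_mem_nhds (Iio_mem_nhds hb)) self_mem_nhdsWithin
          refine Filter.eventuallyEq_of_mem hmem (fun y hy => ?_)
          obtain ⟨hy1, hy2⟩ := hy
          have hy2' : -(1 - δ) ≤ y := hy2
          rcases eq_or_lt_of_le hy2' with he | hlt
          · rw [← he, phid_eq_M θ δ _ hδ1 le_rfl, phiM_bdry θ δ hδ hδ2]
          · exact phid_eq_C θ δ y hlt hy1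
        · rw [phid_eq_M θ δ _ hδ1 le_rfl, phiM_bdry θ δ hδ hδ2]
      have h := hIic.union hIci
      rw [Iic_union_Ici] at h
      exact hasDerivWithinAt_univ.mp h
    · rw [psi_eq_C θ δ r h2.le h1.le]
      refine (hasDerivAt_phiC θ r (by linarith) (by linarith)).congr_of_eventuallyEq ?_
      filter_upwards [Ioo_mem_nhds h2 h1] with y hy
      exact phid_eq_C θ δ y hy.1 hy.2
  · subst h1
    rw [psi_eq_P θ δ _ hδ1 le_rfl hδ hδ2]
    have hIci : HasDerivWithinAt (phiδ θ δ) (θ/(δ*(2-δ))) (Ici (1-δ)) (1-δ) := by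
      refine ((hasDerivAt_phiP θ δ _ hδ hδ2).hasDerivWithinAt).congr_of_eventuallyEq ?_
        (phid_eq_P θ δ _ le_rfl)
      exact Filter.eventuallyEq_of_mem self_mem_nhdsWithin
        (fun y hy => phid_eq_P θ δ y hy)
    have hIic : HasDerivWithinAt (phiδ θ δ) (θ/(δ*(2-δ))) (Iic (1-δ)) (1-δ) := by
      rw [← hval]
      refine ((hasDerivAt_phiC θ (1-δ) (by linarith) (by linarith)).hasDerivWithinAt).congr_of_eventuallyEq
        ?_ ?_
      · have hmem : Ioi (-(1-δ)) ∩ Iic (1-δ) ∈ nhdsWithin (1-δ) (Iic (1-δ)) :=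
          Filter.inter_mem (mem_nhdsWithin_of_mem_nhds (Ioi_mem_nhds hb)) self_mem_nhdsWithin
        refine Filter.eventuallyEq_of_mem hmem (fun y hy => ?_)
        obtain ⟨hy1, hy2⟩ := hy
        have hy2' : y ≤ 1 - δ := hy2
        rcases eq_or_lt_of_le hy2' with he | hlt
        · rw [he, phid_eq_P θ δ _ le_rfl, phiP_bdry θ δ hδ hδ2]
        · exact phid_eq_C θ δ y hy1 hlt
      · rw [phid_eq_P θ δ _ le_rfl, phiP_bdry θ δ hδ hδ2]
    have h := hIic.union hIci
    rw [Iic_union_Ici] at h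
    exact hasDerivWithinAt_univ.mp h
  · rw [psi_eq_P θ δ r hδ1 h1.le hδ hδ2]
    refine (hasDerivAt_phiP θ δ r hδ hδ2).congr_of_eventuallyEq ?_
    filter_upwards [Ioi_mem_nhds h1] with y hy
    exact phid_eq_P θ δ y hy.le

lemma deriv_Flog (θ δ : ℝ) (hδ : 0 < δ) (hδ1 : δ < 1) :
    deriv (Flogδ θ δ) = phiδ θ δ :=
  funext fun r => (hasDerivAt_Flog θ δ hδ hδ1 r).deriv

lemma deriv_phid (θ δ : ℝ) (hδ : 0 < δ) (hδ1 : δ < 1) :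
    deriv (phiδ θ δ) = psiδ θ δ :=
  funext fun r => (hasDerivAt_phid θ δ hδ hδ1 r).deriv

/-! ### Continuity & positivity of psiδ -/

lemma psi_denom_pos (θ δ r : ℝ) (hδ : 0 < δ) (hδ1 : δ < 1) :
    0 < 1 - (max (-(1-δ)) (min r (1-δ)))^2 := by
  have h1 : max (-(1-δ)) (min r (1-δ)) ≤ 1-δ :=
    max_le (by linarith) (min_le_right _ _)
  have h2 : -(1-δ) ≤ max (-(1-δ)) (min r (1-δ)) := le_max_left _ _
  nlinarith

lemma psi_pos (θ δ r : ℝ) (hθ : 0 < θ) (hδ : 0 < δ) (hδ1 : δ < 1) :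
    0 < psiδ θ δ r :=
  div_pos hθ (psi_denom_pos θ δ r hδ hδ1)

lemma continuous_psid (θ δ : ℝ) (hδ : 0 < δ) (hδ1 : δ < 1) :
    Continuous (psiδ θ δ) := by
  apply continuous_const.div
  · fun_prop
  · exact fun r => ne_of_gt (psi_denom_pos θ δ r hδ hδ1)

/-! ### Symmetry -/

lemma Flog_even (θ δ r : ℝ) (hδ1 : δ < 1) : Flogδ θ δ (-r) = Flogδ θ δ r := by
  rcases le_or_gt (1-δ) r with h | h
  · rw [Flog_eq_gP θ δ r h, Flog_eq_gM θ δ (-r) hδ1 (by linarith)]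
    unfold gM gP; ring_nf
  · rcases le_or_gt r (-(1-δ)) with h2 | h2
    · rw [Flog_eq_gM θ δ r hδ1 h2, Flog_eq_gP θ δ (-r) (by linarith)]
      unfold gM gP; ring_nf
    · rw [Flog_eq_gC θ δ r h2 h, Flog_eq_gC θ δ (-r) (by linarith) (by linarith)]
      unfold gC; ring_nf

lemma phid_odd (θ δ r : ℝ) (hδ1 : δ < 1) : phiδ θ δ (-r) = -phiδ θ δ r := by
  rcases le_or_gt (1-δ) r with h | h
  · rw [phid_eq_P θ δ r h, phid_eq_M θ δ (-r) hδ1 (by linarith)]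
    unfold phiM phiP; ring_nf
  · rcases le_or_gt r (-(1-δ)) with h2 | h2
    · rw [phid_eq_M θ δ r hδ1 h2, phid_eq_P θ δ (-r) (by linarith)]
      unfold phiM phiP; ring_nf
    · rw [phid_eq_C θ δ r h2 h, phid_eq_C θ δ (-r) (by linarith) (by linarith)]
      unfold phiC; ring_nf

/-! ### Sign of phiδ, nonnegativity of Flogδ -/

lemma phid_nonneg (θ δ r : ℝ) (hθ : 0 < θ) (hδ : 0 < δ) (hδ1 : δ < 1) (hr : 0 ≤ r) :
    0 ≤ phiδ θ δ r := by
  have hLδ : Real.log δ ≤ 0 := Real.log_nonpos hδ.le hδ1.le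
  have hL2 : 0 ≤ Real.log (2-δ) := Real.log_nonneg (by linarith)
  rcases le_or_gt (1-δ) r with h | h
  · rw [phid_eq_P θ δ r h]
    unfold phiP
    have h1 : (1-r)/δ ≤ 1 := by
      rw [div_le_one hδ]; linarith
    have h2 : 1 ≤ (1+r)/(2-δ) := by
      rw [le_div_iff₀ (by linarith : (0:ℝ) < 2-δ)]; linarith
    have : (0:ℝ) ≤ Real.log (2-δ) - Real.log δ - (1-r)/δ + (1+r)/(2-δ) := by linarith
    positivity
  · rw [phid_eq_C θ δ r (by linarith) h]
    unfold phiC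
    have hlog : Real.log (1-r) ≤ Real.log (1+r) :=
      Real.log_le_log (by linarith) (by linarith)
    have : (0:ℝ) ≤ Real.log (1+r) - Real.log (1-r) := by linarith
    positivity


lemma Flog_zero (θ δ : ℝ) (hδ : 0 < δ) (hδ1 : δ < 1) : Flogδ θ δ 0 = 0 := by
  rw [Flog_eq_gC θ δ 0 (by linarith) (by linarith)]
  simp [gC]

lemma Flog_nonneg (θ δ : ℝ) (hθ : 0 < θ) (hδ : 0 < δ) (hδ1 : δ < 1) (r : ℝ) :
    0 ≤ Flogδ θ δ r := by
  have hdiff : Differentiable ℝ (Flogδ θ δ) :=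
    fun x => (hasDerivAt_Flog θ δ hδ hδ1 x).differentiableAt
  have hmono : MonotoneOn (Flogδ θ δ) (Ici 0) := by
    apply monotoneOn_of_deriv_nonneg (convex_Ici 0) hdiff.continuous.continuousOn
      hdiff.differentiableOn
    intro x hx
    rw [interior_Ici] at hx
    rw [(hasDerivAt_Flog θ δ hδ hδ1 x).deriv]
    exact phid_nonneg θ δ x hθ hδ hδ1 (le_of_lt hx)
  have key : ∀ x : ℝ, 0 ≤ x → 0 ≤ Flogδ θ δ x := by
    intro x hx
    have := hmono (self_mem_Ici) (mem_Ici.mpr hx) hx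
    rwa [Flog_zero θ δ hδ hδ1] at this
  rcases le_or_gt 0 r with h | h
  · exact key r h
  · rw [← Flog_even θ δ r hδ1]
    exact key (-r) (by linarith)

/-! ### Quadratic lower bound for r ≥ 1 -/

lemma Flog_quad (θ δ r : ℝ) (hθ : 0 < θ) (hθ1 : θ ≤ 1) (hδ : 0 < δ) (hδθ : δ < θ/2)
    (hr : 1 ≤ r) : (1-r)^2/2 + (θ/8)*(1+r)^2 - θ/2 ≤ Flogδ θ δ r := by
  have hδ1 : δ < 1 := by linarith
  have hLδ : Real.log δ ≤ 0 := Real.log_nonpos hδ.le hδ1.le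
  have hL2 : 0 ≤ Real.log (2-δ) := Real.log_nonneg (by linarith)
  rw [Flog_eq_gP θ δ r (by linarith)]
  have expand : gP θ δ r = (θ/2)*((1-r) * Real.log δ) + (θ/2)*((1+r) * Real.log (2-δ))
      + (θ/2)*((1-r)^2/(2*δ)) + (θ/2)*((1+r)^2/(2*(2-δ))) - θ/2 := by
    unfold gP; ring
  have hA : 0 ≤ (θ/2)*((1-r) * Real.log δ) := by
    have := mul_nonneg (neg_nonneg.mpr (show (1:ℝ)-r ≤ 0 by linarith)) (neg_nonneg.mpr hLδ)
    nlinarith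
  have hB : 0 ≤ (θ/2)*((1+r) * Real.log (2-δ)) :=
    mul_nonneg (by linarith) (mul_nonneg (by linarith) hL2)
  have hC : (1-r)^2/2 ≤ (θ/2)*((1-r)^2/(2*δ)) := by
    have e : (θ/2)*((1-r)^2/(2*δ)) - (1-r)^2/2 = (1-r)^2*(θ-2*δ)/(4*δ) := by
      field_simp; ring
    have hpos : 0 ≤ (1-r)^2*(θ-2*δ)/(4*δ) :=
      div_nonneg (mul_nonneg (sq_nonneg _) (by linarith)) (by linarith)
    linarith
  have hD : (θ/8)*(1+r)^2 ≤ (θ/2)*((1+r)^2/(2*(2-δ))) := by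
    have h2δ' : (2:ℝ) - δ ≠ 0 := by linarith
    have e : (θ/2)*((1+r)^2/(2*(2-δ))) - (θ/8)*(1+r)^2 = θ*(1+r)^2*δ/(8*(2-δ)) := by
      field_simp; ring
    have hpos : 0 ≤ θ*(1+r)^2*δ/(8*(2-δ)) :=
      div_nonneg (mul_nonneg (mul_nonneg hθ.le (sq_nonneg _)) hδ.le) (by linarith)
    linarith
  linarith [expand, hA, hB, hC, hD]

/-! ### Linear growth of phiδ on the nonnegative axis -/

lemma phid_growth (θ δ r : ℝ) (hθ : 0 < θ) (hδ : 0 < δ) (hδ1 : δ < 1) (hr : 0 ≤ r) :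
    |phiδ θ δ r| ≤ (θ*(1/δ+1)) * r + |(θ/2) * (Real.log (2-δ) - Real.log δ - 1/δ + 1/(2-δ))| := by
  set A := (θ/2) * (Real.log (2-δ) - Real.log δ - 1/δ + 1/(2-δ)) with hAdef
  have habs : 0 ≤ phiδ θ δ r := phid_nonneg θ δ r hθ hδ hδ1 hr
  rw [abs_of_nonneg habs]
  have h2δpos : (0:ℝ) < 2 - δ := by linarith
  rcases le_or_gt (1-δ) r with h | h
  · rw [phid_eq_P θ δ r h]
    have e : phiP θ δ r = A + (θ/2)*(r/δ + r/(2-δ)) := by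
      rw [hAdef]; unfold phiP; field_simp; ring
    have h1 : (θ/2)*(r/δ + r/(2-δ)) ≤ (θ*(1/δ+1)) * r := by
      have hy : 1/(2-δ) ≤ 1 := by rw [div_le_one h2δpos]; linarith
      have hx : (1:ℝ) ≤ 1/δ := by rw [le_div_iff₀ hδ]; linarith
      rw [show r/δ = (1/δ)*r by ring, show r/(2-δ) = (1/(2-δ))*r by ring]
      nlinarith [mul_nonneg (mul_nonneg hθ.le hr) (show (0:ℝ) ≤ 1/δ - 1/(2-δ) by linarith),
        mul_nonneg (mul_nonneg hθ.le hr) (show (0:ℝ) ≤ 1/δ by positivity)]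
    have h2 : A ≤ |A| := le_abs_self A
    linarith [e]
  · rw [phid_eq_C θ δ r (by linarith) h]
    have hr1 : (0:ℝ) < 1 - r := by linarith
    have hlog1 : Real.log (1+r) ≤ r := by
      have := Real.log_le_sub_one_of_pos (show (0:ℝ) < 1+r by linarith)
      linarith
    have hlog2 : -Real.log (1-r) ≤ r/δ := by
      have hpos : (0:ℝ) < (1-r)⁻¹ := by positivity
      have h1 := Real.log_le_sub_one_of_pos hpos
      rw [Real.log_inv] at h1
      have e : (1-r)⁻¹ - 1 = r/(1-r) := by field_simp; ring
      have h2 : r/(1-r) ≤ r/δ := by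
        rcases eq_or_lt_of_le hr with he | hrpos
        · rw [← he]; simp
        · gcongr; linarith
      linarith [e ▸ h1]
    have hcoef : (θ/2)*(Real.log (1+r) - Real.log (1-r)) ≤ (θ*(1/δ+1)) * r := by
      have hb : Real.log (1+r) - Real.log (1-r) ≤ r + r/δ := by linarith
      have step : (θ/2)*(Real.log (1+r) - Real.log (1-r)) ≤ (θ/2)*(r + r/δ) :=
        mul_le_mul_of_nonneg_left hb (by linarith)
      have hx : (1:ℝ) ≤ 1/δ := by rw [le_div_iff₀ hδ]; linarith
      have step2 : (θ/2)*(r + r/δ) ≤ (θ*(1/δ+1)) * r := by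
        rw [show r/δ = (1/δ)*r by ring]
        nlinarith [mul_nonneg (mul_nonneg hθ.le hr) (show (0:ℝ) ≤ 1/δ - 1 by linarith),
          mul_nonneg (mul_nonneg hθ.le hr) (show (0:ℝ) ≤ 1/δ by positivity)]
      linarith
    unfold phiC
    have hAnn : 0 ≤ |A| := abs_nonneg A
    linarith

/-! ### Main theorem -/

/-- For `θ ∈ (0,1]` and `0 < δ < θ/2`, `F_δ(r) = F_δ^log(r) + (1−r²)/2` satisfies
assumptions (A1)–(A2) with `q = 1`: a lower bound `β₀`; `F₁ = F_δ^log` is `C²`,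
nonnegative and convex; `F₂(r) = (1−r²)/2` satisfies `|F₂'(r)| = |r|`; and
`φ_δ = (F_δ^log)'` satisfies the linear growth estimates with constants depending
on `θ` and `δ`. -/
theorem Flogδ_satisfies_assumptions
    (θ δ : ℝ) (hθ : θ ∈ Set.Ioc (0:ℝ) 1) (hδ : 0 < δ) (hδθ : δ < θ/2) :
    (∃ β₀ : ℝ, ∀ r : ℝ, β₀ ≤ Flogδ θ δ r + (1 - r^2)/2) ∧
    ContDiff ℝ 2 (Flogδ θ δ) ∧
    (∀ r : ℝ, 0 ≤ Flogδ θ δ r) ∧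
    ConvexOn ℝ Set.univ (Flogδ θ δ) ∧
    (∀ r : ℝ, |deriv (fun s : ℝ => (1 - s^2)/2) r| = |r|) ∧
    (∃ α > (0:ℝ), ∃ β ≥ (0:ℝ), ∀ r : ℝ,
      |deriv (Flogδ θ δ) r| ≤ α * |r| + β ∧
      |deriv (Flogδ θ δ) r| ≤ α * Flogδ θ δ r + β ∧
      |r * deriv (Flogδ θ δ) r| ≤ α * Flogδ θ δ r + β) := by
  obtain ⟨hθ0, hθ1⟩ := hθ
  have hδ1 : δ < 1 := by linarith
  have hdF : ∀ x, HasDerivAt (Flogδ θ δ) (phiδ θ δ x) x := hasDerivAt_Flog θ δ hδ hδ1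
  have hdiffF : Differentiable ℝ (Flogδ θ δ) := fun x => (hdF x).differentiableAt
  have hdiffφ : Differentiable ℝ (phiδ θ δ) :=
    fun x => (hasDerivAt_phid θ δ hδ hδ1 x).differentiableAt
  have hderiv : deriv (Flogδ θ δ) = phiδ θ δ := deriv_Flog θ δ hδ hδ1
  have hderiv2 : deriv (phiδ θ δ) = psiδ θ δ := deriv_phid θ δ hδ hδ1
  have hFnn : ∀ r, 0 ≤ Flogδ θ δ r := Flog_nonneg θ δ hθ0 hδ hδ1
  -- the quadratic consequence lemmas
  have main2 : ∀ s : ℝ, 1 < s → s ≤ (2/θ) * Flogδ θ δ s + 1 := by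
    intro s hs
    have hq := Flog_quad θ δ s hθ0 hθ1 hδ hδθ hs.le
    have hlin : (θ/2)*(s-1) ≤ Flogδ θ δ s := by
      nlinarith [mul_nonneg hθ0.le (sq_nonneg (s-1)), sq_nonneg (1-s)]
    have h1 := mul_le_mul_of_nonneg_left hlin (show (0:ℝ) ≤ 2/θ by positivity)
    have h2 : (2/θ)*((θ/2)*(s-1)) = s - 1 := by field_simp
    linarith
  have main3 : ∀ s : ℝ, 1 < s → s^2 ≤ (8/θ) * Flogδ θ δ s + 4 := by
    intro s hs
    have hq := Flog_quad θ δ s hθ0 hθ1 hδ hδθ hs.le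
    have hlin : (θ/8)*s^2 - θ/2 ≤ Flogδ θ δ s := by
      nlinarith [mul_nonneg hθ0.le (show (0:ℝ) ≤ 1 + 2*s by linarith), sq_nonneg (1-s)]
    have h1 := mul_le_mul_of_nonneg_left hlin (show (0:ℝ) ≤ 8/θ by positivity)
    have h2 : (8/θ)*((θ/8)*s^2 - θ/2) = s^2 - 4 := by field_simp; ring
    linarith
  have hGr : ∀ r : ℝ, |r| ≤ (2/θ) * Flogδ θ δ r + 1 := by
    intro r
    rcases le_or_gt (|r|) 1 with h | h
    · have : 0 ≤ (2/θ) * Flogδ θ δ r := mul_nonneg (by positivity) (hFnn r)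
      linarith
    · rcases le_or_gt 0 r with h0 | h0
      · rw [abs_of_nonneg h0]; rw [abs_of_nonneg h0] at h; exact main2 r h
      · rw [abs_of_neg h0]; rw [abs_of_neg h0] at h
        rw [← Flog_even θ δ r hδ1]
        exact main2 (-r) h
  have hGsq : ∀ r : ℝ, r^2 ≤ (8/θ) * Flogδ θ δ r + 4 := by
    intro r
    rcases le_or_gt (|r|) 1 with h | h
    · have h1 : r^2 ≤ 1 := by nlinarith [abs_nonneg r, sq_abs r]
      have : 0 ≤ (8/θ) * Flogδ θ δ r := mul_nonneg (by positivity) (hFnn r)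
      linarith
    · rcases le_or_gt 0 r with h0 | h0
      · rw [abs_of_nonneg h0] at h; exact main3 r h
      · rw [abs_of_neg h0] at h
        rw [← Flog_even θ δ r hδ1, show r^2 = (-r)^2 by ring]
        exact main3 (-r) h
  refine ⟨⟨2 - 2/θ - θ/2, fun r => ?_⟩, ?_, hFnn, ?_, fun r => ?_, ?_⟩
  · -- lower bound
    have hβneg : 2 - 2/θ - θ/2 ≤ 0 := by
      have h2 : (2:ℝ) ≤ 2/θ := by rw [le_div_iff₀ hθ0]; nlinarith
      linarith
    have main1 : ∀ s : ℝ, 1 < s → 2 - 2/θ - θ/2 ≤ Flogδ θ δ s + (1 - s^2)/2 := by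
      intro s hs
      have hq := Flog_quad θ δ s hθ0 hθ1 hδ hδθ hs.le
      have key : ((θ*(1+s)-4)^2)/(8*θ) = (θ/8)*(1+s)^2 - (1+s) + 2/θ := by
        field_simp; ring
      have hk : 0 ≤ (θ/8)*(1+s)^2 - (1+s) + 2/θ :=
        key ▸ div_nonneg (sq_nonneg _) (by linarith)
      have e2 : (1-s)^2/2 + (1-s^2)/2 = 1 - s := by ring
      linarith
    rcases le_or_gt (|r|) 1 with h | h
    · have h1 : r^2 ≤ 1 := by nlinarith [abs_nonneg r, sq_abs r]
      have := hFnn r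
      linarith
    · rcases le_or_gt 0 r with h0 | h0
      · rw [abs_of_nonneg h0] at h; exact main1 r h
      · rw [abs_of_neg h0] at h
        rw [← Flog_even θ δ r hδ1, show (1 - r^2)/2 = (1 - (-r)^2)/2 by ring]
        exact main1 (-r) h
  · -- ContDiff
    have h2 : (2 : WithTop ℕ∞) = 1 + 1 := by norm_num
    rw [h2]
    refine contDiff_succ_iff_deriv.mpr ⟨hdiffF, ?_, ?_⟩
    · intro h; simp at h
    · rw [hderiv]
      refine contDiff_one_iff_deriv.mpr ⟨hdiffφ, ?_⟩
      rw [hderiv2]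
      exact continuous_psid θ δ hδ hδ1
  · -- convexity
    refine convexOn_of_deriv2_nonneg convex_univ hdiffF.continuous.continuousOn
      hdiffF.differentiableOn ?_ ?_
    · rw [hderiv]; exact hdiffφ.differentiableOn
    · intro x _
      have e : deriv^[2] (Flogδ θ δ) x = psiδ θ δ x := by
        simp only [Function.iterate_succ, Function.iterate_zero, Function.comp_apply,
          Function.id_def, Function.comp]
        rw [hderiv, hderiv2]
      rw [e]
      exact (psi_pos θ δ x hθ0 hδ hδ1).le
  · -- F₂ derivative
    have h : HasDerivAt (fun s : ℝ => (1 - s^2)/2) (-(2*r^(2-1))/2) r := by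
      exact_mod_cast ((hasDerivAt_pow 2 r).const_sub 1).div_const 2
    rw [h.deriv, show (-(2*r^(2-1))/2 : ℝ) = -r by ring, abs_neg]
  · -- growth bounds
    obtain ⟨A, hAdef⟩ : ∃ x : ℝ, x = (θ/2) * (Real.log (2-δ) - Real.log δ - 1/δ + 1/(2-δ)) :=
      ⟨_, rfl⟩
    obtain ⟨α₁, hα₁def⟩ : ∃ x : ℝ, x = θ*(1/δ+1) := ⟨_, rfl⟩
    obtain ⟨β₁, hβ₁def⟩ : ∃ x : ℝ, x = |A| := ⟨_, rfl⟩
    have hα₁pos : 0 < α₁ := by rw [hα₁def]; positivity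
    have hβ₁ : 0 ≤ β₁ := by rw [hβ₁def]; exact abs_nonneg A
    have hG1 : ∀ r : ℝ, |phiδ θ δ r| ≤ α₁ * |r| + β₁ := by
      intro r
      rw [hα₁def, hβ₁def, hAdef]
      rcases le_or_gt 0 r with h0 | h0
      · rw [abs_of_nonneg h0]; exact phid_growth θ δ r hθ0 hδ hδ1 h0
      · have h := phid_growth θ δ (-r) hθ0 hδ hδ1 (by linarith)
        rw [phid_odd θ δ r hδ1, abs_neg] at h
        rw [abs_of_neg h0]
        exact h
    have hti : (0:ℝ) ≤ θ⁻¹ := inv_nonneg.mpr hθ0.le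
    have hat : 0 ≤ α₁ * θ⁻¹ := mul_nonneg hα₁pos.le hti
    have hbt : 0 ≤ β₁ * θ⁻¹ := mul_nonneg hβ₁ hti
    have eexp : (α₁+β₁)*(1+10/θ) = α₁ + β₁ + 10*(α₁*θ⁻¹) + 10*(β₁*θ⁻¹) := by ring
    have hαge : α₁ ≤ (α₁+β₁)*(1+10/θ) := by rw [eexp]; linarith
    have hcoef2 : (2/θ)*α₁ ≤ (α₁+β₁)*(1+10/θ) := by
      rw [eexp, show (2/θ)*α₁ = 2*(α₁*θ⁻¹) by ring]; linarith
    have hcoef3 : (8/θ)*α₁ + (2/θ)*β₁ ≤ (α₁+β₁)*(1+10/θ) := by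
      rw [eexp, show (8/θ)*α₁ + (2/θ)*β₁ = 8*(α₁*θ⁻¹) + 2*(β₁*θ⁻¹) by ring]; linarith
    refine ⟨(α₁+β₁)*(1+10/θ), by positivity, 5*(α₁+β₁), by positivity, fun r => ?_⟩
    rw [hderiv]
    have hF : 0 ≤ Flogδ θ δ r := hFnn r
    have habs0 : 0 ≤ |r| := abs_nonneg r
    refine ⟨?_, ?_, ?_⟩
    · have h1 := hG1 r
      have h2 := mul_le_mul_of_nonneg_right hαge habs0
      nlinarith [mul_nonneg hβ₁ habs0]
    · have h1 := hG1 r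
      have s2 := mul_le_mul_of_nonneg_left (hGr r) hα₁pos.le
      have e3 : α₁*((2/θ)*Flogδ θ δ r + 1) = ((2/θ)*α₁)*Flogδ θ δ r + α₁ := by ring
      have hcF := mul_le_mul_of_nonneg_right hcoef2 hF
      linarith
    · have habsm : |r * phiδ θ δ r| = |r| * |phiδ θ δ r| := abs_mul r _
      have s1 := mul_le_mul_of_nonneg_left (hG1 r) habs0
      have s2 : |r| * (α₁ * |r| + β₁) = α₁ * r^2 + β₁ * |r| := by
        rw [show |r| * (α₁ * |r| + β₁) = α₁ * (|r| * |r|) + β₁ * |r| by ring,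
          abs_mul_abs_self, ← pow_two]
      have s3 := mul_le_mul_of_nonneg_left (hGsq r) hα₁pos.le
      have s4 := mul_le_mul_of_nonneg_left (hGr r) hβ₁
      have e3 : α₁*((8/θ)*Flogδ θ δ r + 4) + β₁*((2/θ)*Flogδ θ δ r + 1)
          = ((8/θ)*α₁ + (2/θ)*β₁)*Flogδ θ δ r + (4*α₁ + β₁) := by ring
      have hcF := mul_le_mul_of_nonneg_right hcoef3 hF
      linarith
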